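/- arXiv:1206.1720 — 5 statements merged into one kernel-verified Lean document; each statement's English description precedes it below -/
import Mathlib

section
/- Let n ≥ 3 and let α = (α₁,…,αₙ) be a generic n-tuple of positive real numbers. If some subset of {1,…,n} of cardinality n−1 is short, then there are exactly n−1 short singletons and the cardinality of S'(α) is exactly 2^{n−1} − n. -/
/-- If `α` is generic, `n ≥ 3`, and some subset of cardinality `n - 1` is short,
then there are exactly `n - 1` short singletons and `|S'(α)| = 2 ^ (n - 1) - n`. -/
theorem stmt_3 (n : ℕ) (hn : 3 ≤ n) (α : Fin n → ℝ) (hpos : ∀ i, 0 < α i)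
    (hgen : ∀ S : Finset (Fin n), ∑ i ∈ S, α i ≠ ∑ i ∈ Sᶜ, α i)
    (hex : ∃ S : Finset (Fin n), S.card = n - 1 ∧
      ∑ i ∈ S, α i < ∑ i ∈ Sᶜ, α i) :
    {i : Fin n | α i < ∑ j ∈ ({i} : Finset (Fin n))ᶜ, α j}.ncard = n - 1 ∧
    {S : Finset (Fin n) | 2 ≤ S.card ∧
      ∑ i ∈ S, α i < ∑ i ∈ Sᶜ, α i}.ncard = 2 ^ (n - 1) - n := by
  obtain ⟨S, hScard, hSshort⟩ := hex
  -- Sᶜ is a singleton {k}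
  have hcompl : Sᶜ.card = 1 := by
    have := Finset.card_compl S
    simp [Fintype.card_fin] at this
    omega
  obtain ⟨k, hk⟩ := Finset.card_eq_one.mp hcompl
  have hS : S = ({k} : Finset (Fin n))ᶜ := by
    rw [← compl_compl S, hk]
  have hkey : ∑ i ∈ ({k} : Finset (Fin n))ᶜ, α i < α k := by
    rw [hS] at hSshort
    simpa using hSshort
  -- characterization of short sets
  have short_iff : ∀ T : Finset (Fin n),
      (∑ i ∈ T, α i < ∑ i ∈ Tᶜ, α i) ↔ k ∉ T := by
    intro T
    constructor
    · intro hT hkT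
      have h1 : ∑ i ∈ Tᶜ, α i ≤ ∑ i ∈ ({k} : Finset (Fin n))ᶜ, α i := by
        apply Finset.sum_le_sum_of_subset_of_nonneg
        · intro x hx
          simp only [Finset.mem_compl, Finset.mem_singleton] at *
          rintro rfl; exact hx hkT
        · intro i _ _; exact (hpos i).le
      have h2 : α k ≤ ∑ i ∈ T, α i :=
        Finset.single_le_sum (fun i _ => (hpos i).le) hkT
      linarith
    · intro hkT
      have h1 : ∑ i ∈ T, α i ≤ ∑ i ∈ ({k} : Finset (Fin n))ᶜ, α i := by
        apply Finset.sum_le_sum_of_subset_of_nonneg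
        · intro x hx
          simp only [Finset.mem_compl, Finset.mem_singleton]
          rintro rfl; exact hkT hx
        · intro i _ _; exact (hpos i).le
      have h2 : α k ≤ ∑ i ∈ Tᶜ, α i :=
        Finset.single_le_sum (fun i _ => (hpos i).le) (Finset.mem_compl.mpr hkT)
      linarith
  constructor
  · -- singletons
    have h1 : {i : Fin n | α i < ∑ j ∈ ({i} : Finset (Fin n))ᶜ, α j}
        = ↑(({k} : Finset (Fin n))ᶜ) := by
      ext i
      simp only [Set.mem_setOf_eq, Finset.coe_compl, Finset.coe_singleton,
        Set.mem_compl_iff, Set.mem_singleton_iff]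
      rw [show α i = ∑ j ∈ ({i} : Finset (Fin n)), α j from
        (Finset.sum_singleton _ _).symm, short_iff]
      simp [ne_comm]
    rw [h1, Set.ncard_coe_finset, Finset.card_compl]
    simp [Fintype.card_fin]
  · -- sets of cardinality ≥ 2
    set A : Finset (Fin n) := ({k} : Finset (Fin n))ᶜ with hA
    have hAcard : A.card = n - 1 := by
      rw [hA, Finset.card_compl]
      simp [Fintype.card_fin]
    have h2 : {S : Finset (Fin n) | 2 ≤ S.card ∧ ∑ i ∈ S, α i < ∑ i ∈ Sᶜ, α i}
        = ↑(A.powerset.filter (fun T => 2 ≤ T.card)) := by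
      ext T
      simp only [Set.mem_setOf_eq, Finset.coe_filter, Finset.mem_powerset,
        short_iff T, hA]
      constructor
      · rintro ⟨h1, h2⟩
        refine ⟨fun x hx => ?_, h1⟩
        simp only [Finset.mem_compl, Finset.mem_singleton]
        rintro rfl; exact h2 hx
      · rintro ⟨h1, h2⟩
        refine ⟨h2, fun hk' => ?_⟩
        have := h1 hk'
        simp at this
    rw [h2, Set.ncard_coe_finset]
    have hsplit := Finset.card_filter_add_card_filter_not
      (s := A.powerset) (p := fun T => 2 ≤ T.card)
    have hneg : A.powerset.filter (fun T => ¬ 2 ≤ T.card)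
        = A.powerset.filter (fun T => T.card = 0)
          ∪ A.powerset.filter (fun T => T.card = 1) := by
      rw [← Finset.filter_or]
      apply Finset.filter_congr
      intro x _
      omega
    have hdisj : Disjoint (A.powerset.filter (fun T => T.card = 0))
        (A.powerset.filter (fun T => T.card = 1)) := by
      rw [Finset.disjoint_left]
      intro a ha hb
      simp only [Finset.mem_filter] at ha hb
      omega
    have hc0 : (A.powerset.filter (fun T => T.card = 0)).card = 1 := by
      rw [← Finset.powersetCard_eq_filter, Finset.card_powersetCard]
      simp
    have hc1 : (A.powerset.filter (fun T => T.card = 1)).card = n - 1 := by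
      rw [← Finset.powersetCard_eq_filter, Finset.card_powersetCard, hAcard]
      simp
    rw [hneg, Finset.card_union_of_disjoint hdisj, hc0, hc1,
      Finset.card_powerset, hAcard] at hsplit
    omega
end

section
/- Let n ≥ 1, let α₁,…,αₙ be positive real numbers, and let S ⊆ {1,…,n}. Suppose given complex numbers b_i, c_i for i ∈ S and a_i, d_i for i ∉ S satisfying: |c_i|² − |b_i|² = 2α_i for all i ∈ S; |d_i|² − |a_i|² = 2α_i for all i ∉ S; Σ_{i∈S}(|c_i|² + |b_i|²) = Σ_{i∉S}(|a_i|² + |d_i|²); Σ_{i∈S} b_i c_i = 0; and Σ_{i∉S} a_i d_i = 0. If S is short (i.e. Σ_{i∈S} α_i < Σ_{i∉S} α_i) and not all of the numbers b_i (i ∈ S) and a_i (i ∉ S) are zero, then there exist two distinct indices i₁ ≠ i₂ in S with b_{i₁} ≠ 0 and b_{i₂} ≠ 0; in particular |S| ≥ 2. -/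
/-- If `S` is short and the data `(a, b, c, d)` satisfies the real and complex
moment map equations, with not all of the `b i` (`i ∈ S`) and `a i` (`i ∉ S`)
zero, then at least two of the `b i` with `i ∈ S` are nonzero; in particular
`|S| ≥ 2`. -/
theorem stmt_6 (n : ℕ) (hn : 1 ≤ n) (α : Fin n → ℝ) (hpos : ∀ i, 0 < α i)
    (S : Finset (Fin n)) (a b c d : Fin n → ℂ)
    (hbc : ∀ i ∈ S, Complex.normSq (c i) - Complex.normSq (b i) = 2 * α i)
    (had : ∀ i ∈ Sᶜ, Complex.normSq (d i) - Complex.normSq (a i) = 2 * α i)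
    (hsum : ∑ i ∈ S, (Complex.normSq (c i) + Complex.normSq (b i))
      = ∑ i ∈ Sᶜ, (Complex.normSq (a i) + Complex.normSq (d i)))
    (hS0 : ∑ i ∈ S, b i * c i = 0)
    (hSc0 : ∑ i ∈ Sᶜ, a i * d i = 0)
    (hshort : ∑ i ∈ S, α i < ∑ i ∈ Sᶜ, α i)
    (hnz : ¬ ((∀ i ∈ S, b i = 0) ∧ (∀ i ∈ Sᶜ, a i = 0))) :
    (∃ i₁ ∈ S, ∃ i₂ ∈ S, i₁ ≠ i₂ ∧ b i₁ ≠ 0 ∧ b i₂ ≠ 0) ∧ 2 ≤ S.card := by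
  -- Rewrite the left side of hsum
  have hl : ∑ i ∈ S, (Complex.normSq (c i) + Complex.normSq (b i))
      = 2 * ∑ i ∈ S, Complex.normSq (b i) + 2 * ∑ i ∈ S, α i := by
    rw [Finset.mul_sum, Finset.mul_sum, ← Finset.sum_add_distrib]
    refine Finset.sum_congr rfl fun i hi => ?_
    have := hbc i hi; linarith
  have hr : ∑ i ∈ Sᶜ, (Complex.normSq (a i) + Complex.normSq (d i))
      = 2 * ∑ i ∈ Sᶜ, Complex.normSq (a i) + 2 * ∑ i ∈ Sᶜ, α i := by
    rw [Finset.mul_sum, Finset.mul_sum, ← Finset.sum_add_distrib]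
    refine Finset.sum_congr rfl fun i hi => ?_
    have := had i hi; linarith
  rw [hl, hr] at hsum
  have hanonneg : (0:ℝ) ≤ ∑ i ∈ Sᶜ, Complex.normSq (a i) :=
    Finset.sum_nonneg fun i _ => Complex.normSq_nonneg _
  have hbpos : 0 < ∑ i ∈ S, Complex.normSq (b i) := by linarith
  obtain ⟨i₀, hi₀, hb₀⟩ := Finset.exists_ne_zero_of_sum_ne_zero (ne_of_gt hbpos)
  have hb₀' : b i₀ ≠ 0 := fun h => hb₀ (by simp [h])
  by_cases h2 : ∃ j ∈ S, j ≠ i₀ ∧ b j ≠ 0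
  · obtain ⟨j, hj, hji, hbj⟩ := h2
    exact ⟨⟨i₀, hi₀, j, hj, Ne.symm hji, hb₀', hbj⟩,
      Finset.one_lt_card.mpr ⟨i₀, hi₀, j, hj, Ne.symm hji⟩⟩
  · exfalso
    push_neg at h2
    have hsingle : ∑ i ∈ S, b i * c i = b i₀ * c i₀ := by
      refine Finset.sum_eq_single_of_mem i₀ hi₀ fun j hj hji => ?_
      rw [h2 j hj hji, zero_mul]
    rw [hsingle] at hS0
    have hc₀ : c i₀ = 0 := by
      rcases mul_eq_zero.mp hS0 with h | h
      · exact absurd h hb₀'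
      · exact h
    have := hbc i₀ hi₀
    rw [hc₀] at this
    have h1 : 0 < Complex.normSq (b i₀) := Complex.normSq_pos.mpr hb₀'
    have h2' := hpos i₀
    simp only [Complex.normSq_zero] at this
    linarith
end

section
/- Let n ≥ 1, let α₁,…,αₙ be positive real numbers, and let S ⊆ {1,…,n}. Suppose given complex numbers b_i, c_i for i ∈ S and a_i, d_i for i ∉ S satisfying: |c_i|² − |b_i|² = 2α_i for all i ∈ S; |d_i|² − |a_i|² = 2α_i for all i ∉ S; Σ_{i∈S}(|c_i|² + |b_i|²) = Σ_{i∉S}(|a_i|² + |d_i|²); Σ_{i∈S} b_i c_i = 0; and Σ_{i∉S} a_i d_i = 0. Define u_i = (Re(b_i c_i), Im(b_i c_i), (|b_i|² + |c_i|²)/2) ∈ ℝ³ for i ∈ S and u_i = (Re(a_i d_i), −Im(a_i d_i), −(|a_i|² + |d_i|²)/2) ∈ ℝ³ for i ∉ S. Then u_i is future time-like for every i ∈ S, u_i is past time-like for every i ∉ S, u_i ∘ u_i = α_i² for all i, and u₁ + ⋯ + uₙ = 0; that is, the u_i form a closed polygon in Minkowski 3-space whose i-th side has Minkowski length α_i.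 -/
/-- The Minkowski inner product on `ℝ³ = ℝ × ℝ × ℝ`. -/
def mink (v w : ℝ × ℝ × ℝ) : ℝ :=
  -(v.1 * w.1) - v.2.1 * w.2.1 + v.2.2 * w.2.2

/-- The vectors `u i` built from data satisfying the moment map equations form
a closed polygon in Minkowski `3`-space: the sides indexed by `S` are future
time-like, the ones indexed by `Sᶜ` are past time-like, the `i`-th side has
Minkowski length `α i`, and the sides sum to zero. -/
theorem stmt_7 (n : ℕ) (hn : 1 ≤ n) (α : Fin n → ℝ) (hpos : ∀ i, 0 < α i)
    (S : Finset (Fin n)) (a b c d : Fin n → ℂ)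
    (hbc : ∀ i ∈ S, Complex.normSq (c i) - Complex.normSq (b i) = 2 * α i)
    (had : ∀ i ∈ Sᶜ, Complex.normSq (d i) - Complex.normSq (a i) = 2 * α i)
    (hsum : ∑ i ∈ S, (Complex.normSq (c i) + Complex.normSq (b i))
      = ∑ i ∈ Sᶜ, (Complex.normSq (a i) + Complex.normSq (d i)))
    (hS0 : ∑ i ∈ S, b i * c i = 0)
    (hSc0 : ∑ i ∈ Sᶜ, a i * d i = 0)
    (u : Fin n → ℝ × ℝ × ℝ)
    (huS : ∀ i ∈ S, u i = ((b i * c i).re, (b i * c i).im,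
      (Complex.normSq (b i) + Complex.normSq (c i)) / 2))
    (huSc : ∀ i ∈ Sᶜ, u i = ((a i * d i).re, -(a i * d i).im,
      -((Complex.normSq (a i) + Complex.normSq (d i)) / 2))) :
    (∀ i ∈ S, 0 < mink (u i) (u i) ∧ 0 < (u i).2.2) ∧
    (∀ i ∈ Sᶜ, 0 < mink (u i) (u i) ∧ (u i).2.2 < 0) ∧
    (∀ i, mink (u i) (u i) = (α i) ^ 2) ∧
    ∑ i, u i = 0 := by
  have keyS : ∀ i ∈ S, mink (u i) (u i) = (α i) ^ 2 := by
    intro i hi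
    rw [huS i hi]
    have h := hbc i hi
    have hsq : (b i * c i).re * (b i * c i).re + (b i * c i).im * (b i * c i).im
        = Complex.normSq (b i) * Complex.normSq (c i) := by
      rw [← Complex.normSq_mul, Complex.normSq_apply]
    simp only [mink]
    linear_combination (-1) * hsq
      + ((Complex.normSq (c i) - Complex.normSq (b i)) / 4 + α i / 2) * h
  have keySc : ∀ i ∈ Sᶜ, mink (u i) (u i) = (α i) ^ 2 := by
    intro i hi
    rw [huSc i hi]
    have h := had i hi
    have hsq : (a i * d i).re * (a i * d i).re + (a i * d i).im * (a i * d i).im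
        = Complex.normSq (a i) * Complex.normSq (d i) := by
      rw [← Complex.normSq_mul, Complex.normSq_apply]
    simp only [mink]
    linear_combination (-1) * hsq
      + ((Complex.normSq (d i) - Complex.normSq (a i)) / 4 + α i / 2) * h
  refine ⟨?_, ?_, ?_, ?_⟩
  · intro i hi
    have hα := hpos i
    refine ⟨?_, ?_⟩
    · rw [keyS i hi]; positivity
    · rw [huS i hi]
      have h := hbc i hi
      have := Complex.normSq_nonneg (b i)
      simp only
      linarith
  · intro i hi
    have hα := hpos i
    refine ⟨?_, ?_⟩
    · rw [keySc i hi]; positivity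
    · rw [huSc i hi]
      have h := had i hi
      have := Complex.normSq_nonneg (a i)
      simp only
      linarith
  · intro i
    by_cases hi : i ∈ S
    · exact keyS i hi
    · exact keySc i (Finset.mem_compl.mpr hi)
  · have hsplit : ∑ i, u i = ∑ i ∈ S, u i + ∑ i ∈ Sᶜ, u i :=
      (Finset.sum_add_sum_compl S u).symm
    rw [hsplit, Finset.sum_congr rfl huS, Finset.sum_congr rfl huSc]
    have h1 : (∑ i ∈ S, b i * c i).re = 0 := by rw [hS0]; simp
    have h2 : (∑ i ∈ S, b i * c i).im = 0 := by rw [hS0]; simp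
    have h3 : (∑ i ∈ Sᶜ, a i * d i).re = 0 := by rw [hSc0]; simp
    have h4 : (∑ i ∈ Sᶜ, a i * d i).im = 0 := by rw [hSc0]; simp
    rw [Complex.re_sum] at h1 h3
    rw [Complex.im_sum] at h2 h4
    have hsum' : ∑ i ∈ S, (Complex.normSq (b i) + Complex.normSq (c i))
        = ∑ i ∈ Sᶜ, (Complex.normSq (a i) + Complex.normSq (d i)) := by
      rw [← hsum]
      exact Finset.sum_congr rfl fun i _ => by ring
    ext
    · simp only [Prod.fst_add, Prod.fst_sum, Prod.fst_zero]
      rw [h1, h3]; ring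
    · simp only [Prod.snd_add, Prod.fst_add, Prod.snd_sum, Prod.fst_sum,
        Prod.snd_zero, Prod.fst_zero]
      rw [Finset.sum_neg_distrib, h2, h4]; ring
    · simp only [Prod.snd_add, Prod.snd_sum, Prod.snd_zero]
      rw [Finset.sum_neg_distrib, ← Finset.sum_div, ← Finset.sum_div, hsum']
      ring
end

section
/- Let k ≥ 1, let α₁,…,α_k be positive real numbers and let R > 0. Then the set {(u₁,…,u_k) ∈ (ℝ³)^k : u_i ∘ u_i = α_i² and (u_i)₃ > 0 for all i, and u₁ + ⋯ + u_k = (0, 0, R)} is a compact subset of (ℝ³)^k. (This is the key step showing that the moduli space M^{k,1}(α) of closed Minkowski polygons with a single past time-like side is compact.) -/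
/-- The set of `k`-tuples of future time-like vectors with prescribed Minkowski
lengths `α i` summing to `(0, 0, R)` is compact: key step in the compactness
of `M^{k,1}(α)`. -/
theorem stmt_17 (k : ℕ) (hk : 1 ≤ k) (α : Fin k → ℝ) (hpos : ∀ i, 0 < α i)
    (R : ℝ) (hR : 0 < R) :
    IsCompact {u : Fin k → ℝ × ℝ × ℝ |
      (∀ i, mink (u i) (u i) = (α i) ^ 2 ∧ 0 < (u i).2.2) ∧
      ∑ i, u i = ((0 : ℝ), (0 : ℝ), R)} := by
  have hbox : IsCompact (Set.pi Set.univ fun _ : Fin k =>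
      Set.Icc ((-R, -R, 0) : ℝ × ℝ × ℝ) (R, R, R)) :=
    isCompact_univ_pi fun _ => isCompact_Icc
  have hset : {u : Fin k → ℝ × ℝ × ℝ |
      (∀ i, mink (u i) (u i) = (α i) ^ 2 ∧ 0 < (u i).2.2) ∧
      ∑ i, u i = ((0 : ℝ), (0 : ℝ), R)} =
    {u : Fin k → ℝ × ℝ × ℝ |
      (∀ i, mink (u i) (u i) = (α i) ^ 2 ∧ 0 ≤ (u i).2.2) ∧
      ∑ i, u i = ((0 : ℝ), (0 : ℝ), R)} := by
    ext u
    simp only [Set.mem_setOf_eq]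
    constructor
    · rintro ⟨h1, h2⟩
      exact ⟨fun i => ⟨(h1 i).1, (h1 i).2.le⟩, h2⟩
    · rintro ⟨h1, h2⟩
      refine ⟨fun i => ⟨(h1 i).1, ?_⟩, h2⟩
      have hm := (h1 i).1
      have ha := hpos i
      unfold mink at hm
      nlinarith [(h1 i).2, sq_nonneg (u i).1, sq_nonneg (u i).2.1]
  apply hbox.of_isClosed_subset
  · rw [hset]
    apply IsClosed.inter
    · show IsClosed {u : Fin k → ℝ × ℝ × ℝ |
        ∀ i, mink (u i) (u i) = α i ^ 2 ∧ 0 ≤ (u i).2.2}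
      rw [Set.setOf_forall]
      refine isClosed_iInter fun i => ?_
      apply IsClosed.inter
      · exact isClosed_eq (by unfold mink; fun_prop) continuous_const
      · exact isClosed_le continuous_const (Continuous.snd (Continuous.snd (continuous_apply (A := fun _ : Fin k => ℝ × ℝ × ℝ) i)))
    · exact isClosed_eq (continuous_finset_sum _ fun i _ => continuous_apply i)
        continuous_const
  · intro u hu
    obtain ⟨h1, h2⟩ := hu
    -- each third coordinate is positive and they sum to R
    have hzsum : ∑ i, (u i).2.2 = R := by
      have := congrArg (fun v : ℝ × ℝ × ℝ => v.2.2) h2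
      simpa [Prod.snd_sum] using this
    have hzle : ∀ i, (u i).2.2 ≤ R := by
      intro i
      rw [← hzsum]
      exact Finset.single_le_sum (fun j _ => (h1 j).2.le) (Finset.mem_univ i)
    intro i _
    have hm := (h1 i).1
    unfold mink at hm
    have ha := hpos i
    have hz0 := (h1 i).2
    have hzR := hzle i
    have hx : |(u i).1| ≤ (u i).2.2 := by
      rw [abs_le]
      constructor <;> nlinarith [sq_nonneg (u i).2.1]
    have hy : |(u i).2.1| ≤ (u i).2.2 := by
      rw [abs_le]
      constructor <;> nlinarith [sq_nonneg (u i).1]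
    rw [abs_le] at hx hy
    simp only [Set.mem_Icc, Prod.le_def]
    norm_num
    refine ⟨⟨by linarith [hx.1], by linarith [hy.1], hz0.le⟩,
      ⟨by linarith [hx.2], by linarith [hy.2], hzR⟩⟩
end

section
/- Let α₁, α₂, α₃, α₄ > 0 and set ℓ_min = max(α₁ + α₂, α₃ + α₄). (a) If u₁, u₂ ∈ ℝ³ are future time-like, u₃, u₄ ∈ ℝ³ are past time-like, u_i ∘ u_i = α_i² for all i, and u₁ + u₂ + u₃ + u₄ = 0, then u₁ + u₂ is future time-like and its Minkowski norm satisfies √((u₁+u₂) ∘ (u₁+u₂)) ≥ ℓ_min. (b) Conversely, for every real ℓ ≥ ℓ_min there exist such vectors u₁, u₂, u₃, u₄ with √((u₁+u₂) ∘ (u₁+u₂)) = ℓ. Hence the Minkowski length of the diagonal u₁ + u₂ takes exactly the values in the unbounded interval [ℓ_min, ∞). -/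
lemma mink_add_self (u v : ℝ × ℝ × ℝ) :
    mink (u + v) (u + v) = mink u u + 2 * mink u v + mink v v := by
  simp only [mink, Prod.fst_add, Prod.snd_add]; ring

lemma mink_neg_neg (u v : ℝ × ℝ × ℝ) : mink (-u) (-v) = mink u v := by
  simp only [mink, Prod.fst_neg, Prod.snd_neg]; ring

lemma rev_cs (u v : ℝ × ℝ × ℝ) (hu : 0 < mink u u) (hu3 : 0 < u.2.2)
    (hv : 0 < mink v v) (hv3 : 0 < v.2.2) :
    Real.sqrt (mink u u) * Real.sqrt (mink v v) ≤ mink u v := by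
  obtain ⟨a, b, c⟩ := u
  obtain ⟨d, e, f⟩ := v
  simp only [mink] at *
  have h0 : 0 ≤ -(a*d) - b*e + c*f := by
    nlinarith [sq_nonneg (a*e - b*d), sq_nonneg (a*f - c*d), sq_nonneg (b*f - c*e),
      mul_pos hu3 hv3, sq_nonneg (c*f - a*d - b*e)]
  have key : c^2*(a*e-b*d)^2 ≤ (a^2+b^2) * ((a*f-c*d)^2 + (b*f-c*e)^2) := by
    nlinarith [sq_nonneg (a*(a*f-c*d) + b*(b*f-c*e))]
  have hS : (0:ℝ) ≤ (a*f-c*d)^2 + (b*f-c*e)^2 := by positivity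
  have key2 : 0 ≤ c^2 * ((a*f-c*d)^2 + (b*f-c*e)^2 - (a*e-b*d)^2) := by
    nlinarith [mul_nonneg hu.le hS]
  have h1 : (-(a*a) - b*b + c*c) * (-(d*d) - e*e + f*f) ≤ (-(a*d) - b*e + c*f)^2 := by
    nlinarith [key2, pow_pos hu3 2]
  calc Real.sqrt (-(a*a) - b*b + c*c) * Real.sqrt (-(d*d) - e*e + f*f)
      = Real.sqrt ((-(a*a) - b*b + c*c) * (-(d*d) - e*e + f*f)) :=
        (Real.sqrt_mul hu.le _).symm
    _ ≤ Real.sqrt ((-(a*d) - b*e + c*f)^2) := Real.sqrt_le_sqrt h1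
    _ = -(a*d) - b*e + c*f := by rw [Real.sqrt_sq h0]

lemma pair_exists (α β ℓ : ℝ) (hα : 0 < α) (hβ : 0 < β) (hℓ : α + β ≤ ℓ) :
    ∃ u v : ℝ × ℝ × ℝ, (0 < mink u u ∧ 0 < u.2.2) ∧ (0 < mink v v ∧ 0 < v.2.2) ∧
      mink u u = α ^ 2 ∧ mink v v = β ^ 2 ∧ u + v = (0, 0, ℓ) := by
  have hℓ0 : 0 < ℓ := lt_of_lt_of_le (by linarith) hℓ
  set t : ℝ := (ℓ^2 + α^2 - β^2) / (2*ℓ) with ht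
  have hdisc : 0 ≤ t^2 - α^2 := by
    have heq : t^2 - α^2 =
        ((ℓ - α - β) * (ℓ - α + β) * (ℓ + α - β) * (ℓ + α + β)) / (2*ℓ)^2 := by
      rw [ht]; field_simp; ring
    rw [heq]
    apply div_nonneg _ (by positivity)
    exact mul_nonneg (mul_nonneg (mul_nonneg (by linarith) (by linarith))
      (by linarith)) (by linarith)
  set x : ℝ := Real.sqrt (t^2 - α^2) with hx
  have hx2 : x^2 = t^2 - α^2 := Real.sq_sqrt hdisc
  have ht1 : 0 < t := by
    rw [ht]
    apply div_pos _ (by linarith)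
    nlinarith
  have ht2 : 0 < ℓ - t := by
    have heq : ℓ - t = (ℓ^2 - α^2 + β^2) / (2*ℓ) := by
      rw [ht]; field_simp; ring
    rw [heq]
    apply div_pos _ (by linarith)
    nlinarith
  refine ⟨(x, 0, t), (-x, 0, ℓ - t), ?_, ?_, ?_, ?_, ?_⟩
  · constructor
    · simp only [mink]; nlinarith
    · exact ht1
  · constructor
    · simp only [mink]
      have : (ℓ - t)^2 - x^2 = β^2 := by
        rw [hx2, ht]; field_simp; ring
      nlinarith
    · exact ht2
  · simp only [mink]; nlinarith
  · simp only [mink]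
    have : (ℓ - t)^2 - x^2 = β^2 := by
      rw [hx2, ht]; field_simp; ring
    nlinarith
  · simp [Prod.ext_iff]

/-- For closed Minkowski quadrilaterals with two future time-like sides of
lengths `α₁, α₂` and two past time-like sides of lengths `α₃, α₄`, the
diagonal `u₁ + u₂` is future time-like of Minkowski length at least
`ℓ_min = max (α₁ + α₂) (α₃ + α₄)`, and conversely every length
`ℓ ≥ ℓ_min` is attained; so the diagonal length ranges over `[ℓ_min, ∞)`. -/
theorem stmt_18 (α₁ α₂ α₃ α₄ : ℝ)
    (h1 : 0 < α₁) (h2 : 0 < α₂) (h3 : 0 < α₃) (h4 : 0 < α₄) :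
    (∀ u₁ u₂ u₃ u₄ : ℝ × ℝ × ℝ,
      (0 < mink u₁ u₁ ∧ 0 < u₁.2.2) → (0 < mink u₂ u₂ ∧ 0 < u₂.2.2) →
      (0 < mink u₃ u₃ ∧ u₃.2.2 < 0) → (0 < mink u₄ u₄ ∧ u₄.2.2 < 0) →
      mink u₁ u₁ = α₁ ^ 2 → mink u₂ u₂ = α₂ ^ 2 →
      mink u₃ u₃ = α₃ ^ 2 → mink u₄ u₄ = α₄ ^ 2 →
      u₁ + u₂ + u₃ + u₄ = 0 →
      (0 < mink (u₁ + u₂) (u₁ + u₂) ∧ 0 < (u₁ + u₂).2.2 ∧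
        max (α₁ + α₂) (α₃ + α₄) ≤ Real.sqrt (mink (u₁ + u₂) (u₁ + u₂)))) ∧
    (∀ ℓ : ℝ, max (α₁ + α₂) (α₃ + α₄) ≤ ℓ →
      ∃ u₁ u₂ u₃ u₄ : ℝ × ℝ × ℝ,
        (0 < mink u₁ u₁ ∧ 0 < u₁.2.2) ∧ (0 < mink u₂ u₂ ∧ 0 < u₂.2.2) ∧
        (0 < mink u₃ u₃ ∧ u₃.2.2 < 0) ∧ (0 < mink u₄ u₄ ∧ u₄.2.2 < 0) ∧
        mink u₁ u₁ = α₁ ^ 2 ∧ mink u₂ u₂ = α₂ ^ 2 ∧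
        mink u₃ u₃ = α₃ ^ 2 ∧ mink u₄ u₄ = α₄ ^ 2 ∧
        u₁ + u₂ + u₃ + u₄ = 0 ∧
        Real.sqrt (mink (u₁ + u₂) (u₁ + u₂)) = ℓ) := by
  constructor
  · rintro u₁ u₂ u₃ u₄ ⟨hm1, ht1⟩ ⟨hm2, ht2⟩ ⟨hm3, ht3⟩ ⟨hm4, ht4⟩ e1 e2 e3 e4 hsum
    -- diagonal lower bound from the first pair
    have h12 : α₁ * α₂ ≤ mink u₁ u₂ := by
      have := rev_cs u₁ u₂ hm1 ht1 hm2 ht2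
      rwa [e1, e2, Real.sqrt_sq h1.le, Real.sqrt_sq h2.le] at this
    have hd12 : (α₁ + α₂)^2 ≤ mink (u₁ + u₂) (u₁ + u₂) := by
      rw [mink_add_self, e1, e2]; nlinarith
    -- relate to the second pair
    have h34eq : u₃ + u₄ = -(u₁ + u₂) := by
      rw [eq_neg_iff_add_eq_zero, ← hsum]; abel
    have h34 : α₃ * α₄ ≤ mink u₃ u₄ := by
      have := rev_cs (-u₃) (-u₄) (by rw [mink_neg_neg]; exact hm3) (by simpa using ht3)
        (by rw [mink_neg_neg]; exact hm4) (by simpa using ht4)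
      rwa [mink_neg_neg, mink_neg_neg, mink_neg_neg, e3, e4,
        Real.sqrt_sq h3.le, Real.sqrt_sq h4.le] at this
    have hd34 : (α₃ + α₄)^2 ≤ mink (u₁ + u₂) (u₁ + u₂) := by
      have : mink (u₁ + u₂) (u₁ + u₂) = mink (u₃ + u₄) (u₃ + u₄) := by
        rw [h34eq, mink_neg_neg]
      rw [this, mink_add_self, e3, e4]; nlinarith
    have hpos : 0 < mink (u₁ + u₂) (u₁ + u₂) :=
      lt_of_lt_of_le (by positivity) hd12
    refine ⟨hpos, ?_, ?_⟩
    · simp only [Prod.snd_add]; linarith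
    · apply max_le
      · have : α₁ + α₂ = Real.sqrt ((α₁ + α₂)^2) := (Real.sqrt_sq (by linarith)).symm
        rw [this]; exact Real.sqrt_le_sqrt hd12
      · have : α₃ + α₄ = Real.sqrt ((α₃ + α₄)^2) := (Real.sqrt_sq (by linarith)).symm
        rw [this]; exact Real.sqrt_le_sqrt hd34
  · intro ℓ hℓ
    rw [max_le_iff] at hℓ
    have hℓ0 : 0 < ℓ := lt_of_lt_of_le (by linarith) hℓ.1
    obtain ⟨u₁, u₂, hu₁, hu₂, e1, e2, hsum12⟩ := pair_exists α₁ α₂ ℓ h1 h2 hℓ.1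
    obtain ⟨v₃, v₄, hv₃, hv₄, e3, e4, hsum34⟩ := pair_exists α₃ α₄ ℓ h3 h4 hℓ.2
    refine ⟨u₁, u₂, -v₃, -v₄, hu₁, hu₂, ?_, ?_, e1, e2, ?_, ?_, ?_, ?_⟩
    · exact ⟨by rw [mink_neg_neg]; exact hv₃.1, by simpa using hv₃.2⟩
    · exact ⟨by rw [mink_neg_neg]; exact hv₄.1, by simpa using hv₄.2⟩
    · rwa [mink_neg_neg]
    · rwa [mink_neg_neg]
    · have : u₁ + u₂ + -v₃ + -v₄ = (u₁ + u₂) - (v₃ + v₄) := by abel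
      rw [this, hsum12, hsum34, sub_self]
    · rw [hsum12]
      have : mink ((0:ℝ), (0:ℝ), ℓ) ((0:ℝ), (0:ℝ), ℓ) = ℓ^2 := by
        simp [mink]; ring
      rw [this, Real.sqrt_sq hℓ0.le]
end
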